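/- arXiv:2008.05405 — 2 statements merged into one kernel-verified Lean document; each statement's English description precedes it below -/
import Mathlib

section
/- The 5×5 substochastic matrix T_5 obtained from the cat-map transition matrix T_0 by replacing its fifth row with zeros has leading eigenvalue λ_5 = ((1+√2)/2)(3-√5). -/
open Matrix Real Module.End

noncomputable def catT0 : Matrix (Fin 5) (Fin 5) ℂ :=
  !![((3 - Real.sqrt 5) / 2 : ℝ), 0, ((3 - Real.sqrt 5) / 2 : ℝ), (Real.sqrt 5 - 2 : ℝ), 0;
     ((3 - Real.sqrt 5) / 2 : ℝ), 0, ((3 - Real.sqrt 5) / 2 : ℝ), (Real.sqrt 5 - 2 : ℝ), 0;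
     ((3 - Real.sqrt 5) / 2 : ℝ), 0, ((3 - Real.sqrt 5) / 2 : ℝ), (Real.sqrt 5 - 2 : ℝ), 0;
     0, ((Real.sqrt 5 - 1) / 2 : ℝ), 0, 0, ((3 - Real.sqrt 5) / 2 : ℝ);
     0, ((Real.sqrt 5 - 1) / 2 : ℝ), 0, 0, ((3 - Real.sqrt 5) / 2 : ℝ)]

noncomputable def catHole (i : Fin 5) : Matrix (Fin 5) (Fin 5) ℂ :=
  Matrix.updateRow catT0 i 0

theorem stmt_10 :
    Module.End.HasEigenvalue (Matrix.toLin' (catHole 4))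
        (((1 + Real.sqrt 2) / 2 * (3 - Real.sqrt 5) : ℝ) : ℂ) ∧
      ∀ μ : ℂ, Module.End.HasEigenvalue (Matrix.toLin' (catHole 4)) μ →
        ‖μ‖ ≤ (1 + Real.sqrt 2) / 2 * (3 - Real.sqrt 5) := by
  have h5 : Real.sqrt 5 ^ 2 = 5 := Real.sq_sqrt (by norm_num)
  have h2 : Real.sqrt 2 ^ 2 = 2 := Real.sq_sqrt (by norm_num)
  have h5c : ((Real.sqrt 5 : ℝ) : ℂ) ^ 2 = 5 := by exact_mod_cast congrArg (Complex.ofReal) h5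
  have h2c : ((Real.sqrt 2 : ℝ) : ℂ) ^ 2 = 2 := by exact_mod_cast congrArg (Complex.ofReal) h2
  have hs5nn : (0:ℝ) ≤ Real.sqrt 5 := Real.sqrt_nonneg 5
  have hs2nn : (0:ℝ) ≤ Real.sqrt 2 := Real.sqrt_nonneg 2
  have hs5lt : Real.sqrt 5 < 3 := by nlinarith
  have hs2ge : (1:ℝ) ≤ Real.sqrt 2 := by nlinarith
  have hLpos : 0 < (1 + Real.sqrt 2) / 2 * (3 - Real.sqrt 5) := by nlinarith
  constructor
  · -- eigenvector (L, L, L, c, 0)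
    apply Module.End.hasEigenvalue_of_hasEigenvector (x :=
      ![(((1 + Real.sqrt 2) / 2 * (3 - Real.sqrt 5) : ℝ) : ℂ),
        (((1 + Real.sqrt 2) / 2 * (3 - Real.sqrt 5) : ℝ) : ℂ),
        (((1 + Real.sqrt 2) / 2 * (3 - Real.sqrt 5) : ℝ) : ℂ),
        (((Real.sqrt 5 - 1) / 2 : ℝ) : ℂ), 0])
    rw [Module.End.hasEigenvector_iff, Module.End.mem_eigenspace_iff]
    constructor
    · rw [Matrix.toLin'_apply]
      funext i
      fin_cases i <;>
        simp [catHole, catT0, Matrix.mulVec, dotProduct, Fin.sum_univ_five,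
          Matrix.updateRow_apply] <;>
        push_cast <;>
        first
          | ring1
          | linear_combination ((1:ℂ)/4) * h5c -
              ((9 - 6*((Real.sqrt 5 : ℝ):ℂ) + ((Real.sqrt 5 : ℝ):ℂ)^2)/4) * h2c
    · intro hv
      have := congr_fun hv 0
      simp at this
      rcases this with h' | h'
      · have hr : (1:ℝ) + Real.sqrt 2 = 0 := by exact_mod_cast h'
        nlinarith
      · have hr : (3:ℝ) - Real.sqrt 5 = 0 := by
          have := congrArg Complex.re h'; simpa using this
        nlinarith
  · intro μ hμ
    obtain ⟨v, hv⟩ := hμ.exists_hasEigenvector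
    rw [Module.End.hasEigenvector_iff, Module.End.mem_eigenspace_iff] at hv
    obtain ⟨h, hvne⟩ := hv
    rw [Matrix.toLin'_apply] at h
    have e0 := congr_fun h 0
    have e1 := congr_fun h 1
    have e2 := congr_fun h 2
    have e3 := congr_fun h 3
    have e4 := congr_fun h 4
    simp only [catHole, catT0, Matrix.mulVec, dotProduct, Fin.sum_univ_five,
      Matrix.updateRow_apply] at e0 e1 e2 e3 e4
    simp at e0 e1 e2 e3 e4
    by_cases hμ0 : μ = 0
    · rw [hμ0]; simp; positivity
    -- μ ≠ 0
    have hv4 : v 4 = 0 := e4.resolve_left hμ0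
    have hv01 : v 0 = v 1 := by
      have : μ * v 0 = μ * v 1 := by rw [← e0, ← e1]
      exact mul_left_cancel₀ hμ0 this
    have hv02 : v 0 = v 2 := by
      have : μ * v 0 = μ * v 2 := by rw [← e0, ← e2]
      exact mul_left_cancel₀ hμ0 this
    have hv0ne : v 0 ≠ 0 := by
      intro h0
      apply hvne
      funext i
      have hv3 : v 3 = 0 := by
        have : μ * v 3 = 0 := by
          rw [← e3, ← hv01, h0, hv4]; ring
        exact (mul_eq_zero.mp this).resolve_left hμ0
      fin_cases i <;> simp_all
    -- derive the quadratic equation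
    have key : μ ^ 2 = (3 - ((Real.sqrt 5 : ℝ):ℂ)) * μ + (7 - 3 * ((Real.sqrt 5 : ℝ):ℂ)) / 2 := by
      have main : (μ ^ 2 - (3 - ((Real.sqrt 5 : ℝ):ℂ)) * μ
          - (7 - 3 * ((Real.sqrt 5 : ℝ):ℂ)) / 2) * v 0 = 0 := by
        linear_combination (-μ) * e0 - (((Real.sqrt 5 : ℝ):ℂ) - 2) * e3
          - ((((Real.sqrt 5 : ℝ):ℂ) - 2) * (((Real.sqrt 5 : ℝ):ℂ) - 1) / 2) * hv01
          - ((3 - ((Real.sqrt 5 : ℝ):ℂ)) * μ / 2) * hv02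
          + ((((Real.sqrt 5 : ℝ):ℂ) - 2) * (3 - ((Real.sqrt 5 : ℝ):ℂ)) / 2) * hv4
          + (v 0 / 2) * h5c
      rcases mul_eq_zero.mp main with h' | h'
      · linear_combination h'
      · exact absurd h' hv0ne
    -- factor the quadratic
    have hfac : (μ - (((1 + Real.sqrt 2) / 2 * (3 - Real.sqrt 5) : ℝ) : ℂ))
        * (μ - (((1 - Real.sqrt 2) / 2 * (3 - Real.sqrt 5) : ℝ) : ℂ)) = 0 := by
      push_cast
      linear_combination key + (-(1:ℂ)/4) * h5c
        - ((9 - 6*((Real.sqrt 5 : ℝ):ℂ) + ((Real.sqrt 5 : ℝ):ℂ)^2)/4) * h2c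
    rcases mul_eq_zero.mp hfac with h' | h'
    · have hm : μ = (((1 + Real.sqrt 2) / 2 * (3 - Real.sqrt 5) : ℝ) : ℂ) := by
        linear_combination h'
      rw [hm, Complex.norm_real, Real.norm_eq_abs, abs_of_pos hLpos]
    · have hm : μ = (((1 - Real.sqrt 2) / 2 * (3 - Real.sqrt 5) : ℝ) : ℂ) := by
        linear_combination h'
      rw [hm, Complex.norm_real, Real.norm_eq_abs]
      have habs : |(1 - Real.sqrt 2) / 2 * (3 - Real.sqrt 5)|
          = (Real.sqrt 2 - 1) / 2 * (3 - Real.sqrt 5) := by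
        rw [abs_of_nonpos (by nlinarith)]; ring
      rw [habs]
      exact mul_le_mul_of_nonneg_right (by linarith) (by linarith)
end

section
/- For each i ∈ {1,2,3,4}, the 5×5 substochastic matrix T_i obtained from the cat-map transition matrix T_0 by zeroing out row i has leading eigenvalue 3-√5. -/
open Matrix Real Module.End

lemma hasEig_iff (M : Matrix (Fin 5) (Fin 5) ℂ) (μ : ℂ) :
    Module.End.HasEigenvalue (Matrix.toLin' M) μ ↔ (M - μ • 1).det = 0 := by
  rw [← Matrix.exists_mulVec_eq_zero_iff]
  constructor
  · intro h
    obtain ⟨v, hv⟩ := h.exists_hasEigenvector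
    refine ⟨v, hv.2, ?_⟩
    have h1 : M.mulVec v = μ • v := by
      have := hv.apply_eq_smul
      rwa [Matrix.toLin'_apply] at this
    rw [Matrix.sub_mulVec, h1, Matrix.smul_mulVec, Matrix.one_mulVec, sub_self]
  · rintro ⟨v, hv0, hv⟩
    apply Module.End.hasEigenvalue_of_hasEigenvector (x := v)
    refine ⟨Module.End.mem_eigenspace_iff.mpr ?_, hv0⟩
    rw [Matrix.toLin'_apply]
    rwa [Matrix.sub_mulVec, Matrix.smul_mulVec, Matrix.one_mulVec, sub_eq_zero] at hv

lemma sqrt5_le_three : Real.sqrt 5 ≤ 3 := by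
  nlinarith [Real.sq_sqrt (show (0:ℝ) ≤ 5 by norm_num), Real.sqrt_nonneg 5]

lemma h5C : ((Real.sqrt 5 : ℝ) : ℂ) ^ 2 = 5 := by
  norm_cast; exact Real.sq_sqrt (by norm_num)

set_option maxHeartbeats 4000000 in
theorem stmt_11 (i : Fin 5) (hi : i ≠ 4) :
    Module.End.HasEigenvalue (Matrix.toLin' (catHole i)) ((3 - Real.sqrt 5 : ℝ) : ℂ) ∧
      ∀ μ : ℂ, Module.End.HasEigenvalue (Matrix.toLin' (catHole i)) μ →
        ‖μ‖ ≤ 3 - Real.sqrt 5 := by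
  have h03 : (0:ℝ) ≤ 3 - Real.sqrt 5 := by linarith [sqrt5_le_three]
  have hcase : i = 0 ∨ i = 1 ∨ i = 2 ∨ i = 3 := by omega
  rcases hcase with rfl | rfl | rfl | rfl
  · -- i = 0
    have hdet : ∀ μ : ℂ, (catHole 0 - μ • 1).det
        = -μ^4 * (μ - (3 - ((Real.sqrt 5 : ℝ) : ℂ))) := by
      intro μ
      have hM : catHole 0 - μ • 1 =
          !![-μ, 0, 0, 0, 0;
             ((3:ℂ) - (Real.sqrt 5:ℝ))/2, -μ, ((3:ℂ) - (Real.sqrt 5:ℝ))/2, ((Real.sqrt 5:ℝ):ℂ) - 2, 0;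
             ((3:ℂ) - (Real.sqrt 5:ℝ))/2, 0, ((3:ℂ) - (Real.sqrt 5:ℝ))/2 - μ, ((Real.sqrt 5:ℝ):ℂ) - 2, 0;
             0, (((Real.sqrt 5:ℝ):ℂ) - 1)/2, 0, -μ, ((3:ℂ) - (Real.sqrt 5:ℝ))/2;
             0, (((Real.sqrt 5:ℝ):ℂ) - 1)/2, 0, 0, ((3:ℂ) - (Real.sqrt 5:ℝ))/2 - μ] := by
        ext i j
        fin_cases i <;> fin_cases j <;>
          simp [catHole, catT0, Matrix.updateRow_apply, Matrix.one_apply,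
            Matrix.vecHead, Matrix.vecTail] <;> push_cast <;> ring
      rw [hM]
      simp [Matrix.det_succ_row_zero, Fin.sum_univ_succ, Fin.succAbove, -Fin.val_fin_lt, -Fin.lt_def,
        Fin.castSucc, Fin.castAdd, Fin.castLE]
      linear_combination (-μ^3/4) * h5C
    constructor
    · rw [hasEig_iff, hdet]; push_cast; ring
    · intro μ hμ
      rw [hasEig_iff, hdet] at hμ
      rcases mul_eq_zero.mp hμ with h | h
      · have hμ0 : μ = 0 := pow_eq_zero_iff (n := 4) (by norm_num) |>.mp (neg_eq_zero.mp h)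
        simp [hμ0]; linarith
      · have hμ0 : μ = ((3 - Real.sqrt 5 : ℝ):ℂ) := by
          rw [sub_eq_zero] at h; rw [h]; push_cast; ring
        rw [hμ0, Complex.norm_real, Real.norm_eq_abs, abs_of_nonneg h03]
  · -- i = 1
    have hdet : ∀ μ : ℂ, (catHole 1 - μ • 1).det
        = -μ^3 * (μ - (3 - ((Real.sqrt 5 : ℝ) : ℂ))) * (μ - (3 - ((Real.sqrt 5 : ℝ) : ℂ))/2) := by
      intro μ
      have hM : catHole 1 - μ • 1 =
          !![((3:ℂ) - (Real.sqrt 5:ℝ))/2 - μ, 0, ((3:ℂ) - (Real.sqrt 5:ℝ))/2, ((Real.sqrt 5:ℝ):ℂ) - 2, 0;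
             0, -μ, 0, 0, 0;
             ((3:ℂ) - (Real.sqrt 5:ℝ))/2, 0, ((3:ℂ) - (Real.sqrt 5:ℝ))/2 - μ, ((Real.sqrt 5:ℝ):ℂ) - 2, 0;
             0, (((Real.sqrt 5:ℝ):ℂ) - 1)/2, 0, -μ, ((3:ℂ) - (Real.sqrt 5:ℝ))/2;
             0, (((Real.sqrt 5:ℝ):ℂ) - 1)/2, 0, 0, ((3:ℂ) - (Real.sqrt 5:ℝ))/2 - μ] := by
        ext i j
        fin_cases i <;> fin_cases j <;>
          simp [catHole, catT0, Matrix.updateRow_apply, Matrix.one_apply,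
            Matrix.vecHead, Matrix.vecTail] <;> push_cast <;> ring
      rw [hM]
      simp [Matrix.det_succ_row_zero, Fin.sum_univ_succ, Fin.succAbove, -Fin.val_fin_lt, -Fin.lt_def,
        Fin.castSucc, Fin.castAdd, Fin.castLE]
      ring
    constructor
    · rw [hasEig_iff, hdet]; push_cast; ring
    · intro μ hμ
      rw [hasEig_iff, hdet] at hμ
      rcases mul_eq_zero.mp hμ with h | h
      · rcases mul_eq_zero.mp h with h' | h'
        · have hμ0 : μ = 0 := pow_eq_zero_iff (n := 3) (by norm_num) |>.mp (neg_eq_zero.mp h')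
          simp [hμ0]; linarith
        · have hμ0 : μ = ((3 - Real.sqrt 5 : ℝ):ℂ) := by
            rw [sub_eq_zero] at h'; rw [h']; push_cast; ring
          rw [hμ0, Complex.norm_real, Real.norm_eq_abs, abs_of_nonneg h03]
      · have hμ0 : μ = (((3 - Real.sqrt 5)/2 : ℝ):ℂ) := by
          rw [sub_eq_zero] at h; rw [h]; push_cast; ring
        rw [hμ0, Complex.norm_real, Real.norm_eq_abs, abs_of_nonneg (by linarith)]
        linarith
  · -- i = 2
    have hdet : ∀ μ : ℂ, (catHole 2 - μ • 1).det
        = -μ^4 * (μ - (3 - ((Real.sqrt 5 : ℝ) : ℂ))) := by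
      intro μ
      have hM : catHole 2 - μ • 1 =
          !![((3:ℂ) - (Real.sqrt 5:ℝ))/2 - μ, 0, ((3:ℂ) - (Real.sqrt 5:ℝ))/2, ((Real.sqrt 5:ℝ):ℂ) - 2, 0;
             ((3:ℂ) - (Real.sqrt 5:ℝ))/2, -μ, ((3:ℂ) - (Real.sqrt 5:ℝ))/2, ((Real.sqrt 5:ℝ):ℂ) - 2, 0;
             0, 0, -μ, 0, 0;
             0, (((Real.sqrt 5:ℝ):ℂ) - 1)/2, 0, -μ, ((3:ℂ) - (Real.sqrt 5:ℝ))/2;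
             0, (((Real.sqrt 5:ℝ):ℂ) - 1)/2, 0, 0, ((3:ℂ) - (Real.sqrt 5:ℝ))/2 - μ] := by
        ext i j
        fin_cases i <;> fin_cases j <;>
          simp [catHole, catT0, Matrix.updateRow_apply, Matrix.one_apply,
            Matrix.vecHead, Matrix.vecTail] <;> push_cast <;> ring
      rw [hM]
      simp [Matrix.det_succ_row_zero, Fin.sum_univ_succ, Fin.succAbove, -Fin.val_fin_lt, -Fin.lt_def,
        Fin.castSucc, Fin.castAdd, Fin.castLE]
      linear_combination (μ^3/4) * h5C
    constructor
    · rw [hasEig_iff, hdet]; push_cast; ring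
    · intro μ hμ
      rw [hasEig_iff, hdet] at hμ
      rcases mul_eq_zero.mp hμ with h | h
      · have hμ0 : μ = 0 := pow_eq_zero_iff (n := 4) (by norm_num) |>.mp (neg_eq_zero.mp h)
        simp [hμ0]; linarith
      · have hμ0 : μ = ((3 - Real.sqrt 5 : ℝ):ℂ) := by
          rw [sub_eq_zero] at h; rw [h]; push_cast; ring
        rw [hμ0, Complex.norm_real, Real.norm_eq_abs, abs_of_nonneg h03]
  · -- i = 3
    have hdet : ∀ μ : ℂ, (catHole 3 - μ • 1).det
        = -μ^3 * (μ - (3 - ((Real.sqrt 5 : ℝ) : ℂ))) * (μ - (3 - ((Real.sqrt 5 : ℝ) : ℂ))/2) := by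
      intro μ
      have hM : catHole 3 - μ • 1 =
          !![((3:ℂ) - (Real.sqrt 5:ℝ))/2 - μ, 0, ((3:ℂ) - (Real.sqrt 5:ℝ))/2, ((Real.sqrt 5:ℝ):ℂ) - 2, 0;
             ((3:ℂ) - (Real.sqrt 5:ℝ))/2, -μ, ((3:ℂ) - (Real.sqrt 5:ℝ))/2, ((Real.sqrt 5:ℝ):ℂ) - 2, 0;
             ((3:ℂ) - (Real.sqrt 5:ℝ))/2, 0, ((3:ℂ) - (Real.sqrt 5:ℝ))/2 - μ, ((Real.sqrt 5:ℝ):ℂ) - 2, 0;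
             0, 0, 0, -μ, 0;
             0, (((Real.sqrt 5:ℝ):ℂ) - 1)/2, 0, 0, ((3:ℂ) - (Real.sqrt 5:ℝ))/2 - μ] := by
        ext i j
        fin_cases i <;> fin_cases j <;>
          simp [catHole, catT0, Matrix.updateRow_apply, Matrix.one_apply,
            Matrix.vecHead, Matrix.vecTail] <;> push_cast <;> ring
      rw [hM]
      simp [Matrix.det_succ_row_zero, Fin.sum_univ_succ, Fin.succAbove, -Fin.val_fin_lt, -Fin.lt_def,
        Fin.castSucc, Fin.castAdd, Fin.castLE]
      ring
    constructor
    · rw [hasEig_iff, hdet]; push_cast; ring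
    · intro μ hμ
      rw [hasEig_iff, hdet] at hμ
      rcases mul_eq_zero.mp hμ with h | h
      · rcases mul_eq_zero.mp h with h' | h'
        · have hμ0 : μ = 0 := pow_eq_zero_iff (n := 3) (by norm_num) |>.mp (neg_eq_zero.mp h')
          simp [hμ0]; linarith
        · have hμ0 : μ = ((3 - Real.sqrt 5 : ℝ):ℂ) := by
            rw [sub_eq_zero] at h'; rw [h']; push_cast; ring
          rw [hμ0, Complex.norm_real, Real.norm_eq_abs, abs_of_nonneg h03]
      · have hμ0 : μ = (((3 - Real.sqrt 5)/2 : ℝ):ℂ) := by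
          rw [sub_eq_zero] at h; rw [h]; push_cast; ring
        rw [hμ0, Complex.norm_real, Real.norm_eq_abs, abs_of_nonneg (by linarith)]
        linarith
end
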